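/- For all integers n ≥ 2, the Fibonacci numbers satisfy F_{2n+2} = Σ_{j=0}^{⌊n/2⌋} C(n−j, j) · (−1)^j · 3^{n−2j}, where C(m,k) denotes the binomial coefficient. -/

import Mathlib

open Finset

private def S (n : ℕ) : ℤ :=
  ∑ j ∈ range (n + 1), ((n - j).choose j : ℤ) * (-1 : ℤ) ^ j * 3 ^ (n - 2 * j)

private lemma S_rec (n : ℕ) : S (n + 2) = 3 * S (n + 1) - S n := by
  have h3 : 3 * S (n + 1)
      = ∑ j ∈ range (n + 2), ((n + 1 - j).choose j : ℤ) * (-1 : ℤ) ^ j * 3 ^ (n + 2 - 2 * j) := by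
    rw [S, Finset.mul_sum]
    refine Finset.sum_congr rfl fun j hj => ?_
    rcases le_or_gt (2 * j) (n + 1) with h | h
    · have he : n + 2 - 2 * j = (n + 1 - 2 * j) + 1 := by omega
      rw [he, pow_succ]
      ring
    · have hz : (n + 1 - j).choose j = 0 := Nat.choose_eq_zero_of_lt (by omega)
      simp [hz]
  have hsplit : ∀ i ∈ range (n + 1),
      ((n + 2 - (i + 1)).choose (i + 1) : ℤ) * (-1 : ℤ) ^ (i + 1) * 3 ^ (n + 2 - 2 * (i + 1))
      = ((n + 1 - (i + 1)).choose (i + 1) : ℤ) * (-1 : ℤ) ^ (i + 1) * 3 ^ (n + 2 - 2 * (i + 1))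
        - ((n - i).choose i : ℤ) * (-1 : ℤ) ^ i * 3 ^ (n - 2 * i) := by
    intro i hi
    simp only [Finset.mem_range] at hi
    have h1 : n + 2 - (i + 1) = (n - i) + 1 := by omega
    have h2 : n + 1 - (i + 1) = n - i := by omega
    have h3 : n + 2 - 2 * (i + 1) = n - 2 * i := by omega
    rw [h1, h2, h3, Nat.choose_succ_succ, pow_succ]
    push_cast
    ring
  have hL : S (n + 2)
      = (∑ i ∈ range (n + 1),
          ((n + 2 - (i + 1)).choose (i + 1) : ℤ) * (-1 : ℤ) ^ (i + 1) * 3 ^ (n + 2 - 2 * (i + 1)))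
        + 3 ^ (n + 2) := by
    rw [S, Finset.sum_range_succ]
    have hz : ((n + 2 - (n + 2)).choose (n + 2) : ℤ) = 0 := by
      simp [Nat.sub_self]
    rw [hz]
    rw [Finset.sum_range_succ']
    simp
  have hR : 3 * S (n + 1)
      = (∑ i ∈ range (n + 1),
          ((n + 1 - (i + 1)).choose (i + 1) : ℤ) * (-1 : ℤ) ^ (i + 1) * 3 ^ (n + 2 - 2 * (i + 1)))
        + 3 ^ (n + 2) := by
    rw [h3, Finset.sum_range_succ']
    simp
  rw [hL, hR, Finset.sum_congr rfl hsplit, Finset.sum_sub_distrib]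
  rw [S]
  ring

private lemma main_ind (F : ℕ → ℤ)
    (hF0 : F 0 = 0) (hF1 : F 1 = 1)
    (hF : ∀ n : ℕ, F (n + 2) = F (n + 1) + F n) :
    ∀ n : ℕ, F (2 * n + 2) = S n ∧ F (2 * (n + 1) + 2) = S (n + 1) := by
  intro n
  induction n with
  | zero =>
    have h2 : F 2 = F 1 + F 0 := hF 0
    have h3 : F 3 = F 2 + F 1 := hF 1
    have h4 : F 4 = F 3 + F 2 := hF 2
    constructor
    · show F 2 = S 0
      simp [S, Finset.sum_range_succ]
      omega
    · show F 4 = S 1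
      simp [S, Finset.sum_range_succ]
      omega
  | succ n ih =>
    refine ⟨ih.2, ?_⟩
    have e1 : F (2 * n + 6) = F (2 * n + 5) + F (2 * n + 4) := hF (2 * n + 4)
    have e2 : F (2 * n + 5) = F (2 * n + 4) + F (2 * n + 3) := hF (2 * n + 3)
    have e3 : F (2 * n + 4) = F (2 * n + 3) + F (2 * n + 2) := hF (2 * n + 2)
    have h1 : F (2 * (n + 1 + 1) + 2) = 3 * F (2 * (n + 1) + 2) - F (2 * n + 2) := by
      have ha : 2 * (n + 1 + 1) + 2 = 2 * n + 6 := by ring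
      have hb : 2 * (n + 1) + 2 = 2 * n + 4 := by ring
      rw [ha, hb]
      omega
    rw [h1, ih.1, ih.2, S_rec]

theorem fib_binomial_even (F : ℕ → ℤ)
    (hF0 : F 0 = 0) (hF1 : F 1 = 1)
    (hF : ∀ n : ℕ, F (n + 2) = F (n + 1) + F n)
    (n : ℕ) (hn : 2 ≤ n) :
    F (2 * n + 2) = ∑ j ∈ Finset.range (n / 2 + 1),
      ((n - j).choose j : ℤ) * (-1 : ℤ) ^ j * 3 ^ (n - 2 * j) := by
  have h := (main_ind F hF0 hF1 hF n).1
  rw [h, S]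
  symm
  apply Finset.sum_subset
  · intro x hx
    simp only [Finset.mem_range] at *
    omega
  · intro j hj hj'
    simp only [Finset.mem_range] at *
    have hz : (n - j).choose j = 0 := Nat.choose_eq_zero_of_lt (by omega)
    simp [hz]
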